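/- In any semigroup, if a J-class contains a stable element y, then every element J-related to y is D-related to y; that is, the J-class of y is a D-class. -/
import Mathlib


/-- `x ≤_R y` in a semigroup: `x ∈ yS¹`. -/
def leR {S : Type*} [Semigroup S] (x y : S) : Prop := x = y ∨ ∃ t, x = y * t

/-- `x ≤_L y` in a semigroup: `x ∈ S¹y`. -/
def leL {S : Type*} [Semigroup S] (x y : S) : Prop := x = y ∨ ∃ t, x = t * y

/-- `x ≤_J y` in a semigroup: `x ∈ S¹yS¹`. -/
def leJ {S : Type*} [Semigroup S] (x y : S) : Prop :=
  x = y ∨ (∃ t, x = y * t) ∨ (∃ t, x = t * y) ∨ ∃ t u, x = t * y * u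

/-- Green's relation `R`: `xS¹ = yS¹`. -/
def GreenR {S : Type*} [Semigroup S] (x y : S) : Prop := leR x y ∧ leR y x

/-- Green's relation `L`: `S¹x = S¹y`. -/
def GreenL {S : Type*} [Semigroup S] (x y : S) : Prop := leL x y ∧ leL y x

/-- Green's relation `J`: `S¹xS¹ = S¹yS¹`. -/
def GreenJ {S : Type*} [Semigroup S] (x y : S) : Prop := leJ x y ∧ leJ y x

/-- Green's relation `H = R ∩ L`. -/
def GreenH {S : Type*} [Semigroup S] (x y : S) : Prop := GreenR x y ∧ GreenL x y

/-- Green's relation `D = R ∘ L`. -/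
def GreenD {S : Type*} [Semigroup S] (x y : S) : Prop := ∃ z, GreenR x z ∧ GreenL z y


lemma leJ_trans {S : Type*} [Semigroup S] {a b c : S} (h1 : leJ a b) (h2 : leJ b c) :
    leJ a c := by
  rcases h1 with rfl | ⟨t, rfl⟩ | ⟨t, rfl⟩ | ⟨t, u, rfl⟩
  · exact h2
  · rcases h2 with rfl | ⟨s, rfl⟩ | ⟨s, rfl⟩ | ⟨s, v, rfl⟩
    · exact Or.inr (Or.inl ⟨t, rfl⟩)
    · exact Or.inr (Or.inl ⟨s * t, by rw [mul_assoc]⟩)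
    · exact Or.inr (Or.inr (Or.inr ⟨s, t, rfl⟩))
    · exact Or.inr (Or.inr (Or.inr ⟨s, v * t, by rw [mul_assoc]⟩))
  · rcases h2 with rfl | ⟨s, rfl⟩ | ⟨s, rfl⟩ | ⟨s, v, rfl⟩
    · exact Or.inr (Or.inr (Or.inl ⟨t, rfl⟩))
    · exact Or.inr (Or.inr (Or.inr ⟨t, s, (mul_assoc ..).symm⟩))
    · exact Or.inr (Or.inr (Or.inl ⟨t * s, by rw [mul_assoc]⟩))
    · exact Or.inr (Or.inr (Or.inr ⟨t * s, v, by simp only [mul_assoc]⟩))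
  · rcases h2 with rfl | ⟨s, rfl⟩ | ⟨s, rfl⟩ | ⟨s, v, rfl⟩
    · exact Or.inr (Or.inr (Or.inr ⟨t, u, rfl⟩))
    · exact Or.inr (Or.inr (Or.inr ⟨t, s * u, by simp only [mul_assoc]⟩))
    · exact Or.inr (Or.inr (Or.inr ⟨t * s, u, by rw [mul_assoc t s c]⟩))
    · exact Or.inr (Or.inr (Or.inr ⟨t * s, v * u, by
        simp only [mul_assoc]⟩))

lemma leR_mul_left {S : Type*} [Semigroup S] {a b : S} (c : S) (h : leR a b) :
    leR (c * a) (c * b) := by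
  rcases h with rfl | ⟨t, rfl⟩
  · exact Or.inl rfl
  · exact Or.inr ⟨t, by rw [mul_assoc]⟩

/-- In any semigroup, a `J`-class containing a stable element `y` is a `D`-class:
every element `J`-related to `y` is `D`-related to `y`. -/
theorem stmt_8 {S : Type*} [Semigroup S] (y : S)
    (hstab : ∀ a : S, (GreenJ y (y * a) → GreenR y (y * a)) ∧
      (GreenJ y (a * y) → GreenL y (a * y))) :
    ∀ x : S, GreenJ x y → GreenD x y := by
  intro x hxy
  obtain ⟨hxly, hylx⟩ := hxy
  rcases hxly with rfl | ⟨t, rfl⟩ | ⟨t, rfl⟩ | ⟨t, u, rfl⟩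
  · exact ⟨x, ⟨Or.inl rfl, Or.inl rfl⟩, Or.inl rfl, Or.inl rfl⟩
  · have hR : GreenR y (y * t) :=
      (hstab t).1 ⟨hylx, Or.inr (Or.inl ⟨t, rfl⟩)⟩
    exact ⟨y, ⟨hR.2, hR.1⟩, Or.inl rfl, Or.inl rfl⟩
  · have hL : GreenL y (t * y) :=
      (hstab t).2 ⟨hylx, Or.inr (Or.inr (Or.inl ⟨t, rfl⟩))⟩
    exact ⟨t * y, ⟨Or.inl rfl, Or.inl rfl⟩, hL.2, hL.1⟩
  · -- y J y*u
    have hJyu : GreenJ y (y * u) :=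
      ⟨leJ_trans hylx (Or.inr (Or.inr (Or.inl ⟨t, by rw [mul_assoc]⟩))),
        Or.inr (Or.inl ⟨u, rfl⟩)⟩
    have hJty : GreenJ y (t * y) :=
      ⟨leJ_trans hylx (Or.inr (Or.inl ⟨u, rfl⟩)),
        Or.inr (Or.inr (Or.inl ⟨t, rfl⟩))⟩
    have hR : GreenR y (y * u) := (hstab u).1 hJyu
    have hL : GreenL y (t * y) := (hstab t).2 hJty
    refine ⟨t * y, ⟨?_, ?_⟩, hL.2, hL.1⟩
    · have := leR_mul_left t hR.2
      rwa [← mul_assoc] at this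
    · have := leR_mul_left t hR.1
      rwa [← mul_assoc] at this
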